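/- Quasi-periodicity of the explicit kernel ϑ in the integration variables: for every 1 ≤ μ ≤ m and all admissible arguments, ϑ_ε(x₁, …, x_μ q⁻⁴, …, x_m | ζ₁, …, ζ_N) = (∏_{j=1}^{N} (−x_μ q⁻¹/z_j)) · ϑ_ε(x₁, …, x_m | ζ₁, …, ζ_N), where z_j = ζ_j². -/

import Mathlib

noncomputable section

open scoped BigOperators

/-- The infinite q-Pochhammer symbol `(a; p)_∞ = ∏_{k ≥ 0} (1 - a pᵏ)`. -/
def qPoch (a p : ℂ) : ℂ := ∏' k : ℕ, (1 - a * p ^ k)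

/-- The double infinite q-Pochhammer symbol `(a; p, p)_∞ = ∏_{k,l ≥ 0} (1 - a p^{k+l})`. -/
def qPoch2 (a p : ℂ) : ℂ := ∏' kl : ℕ × ℕ, (1 - a * p ^ (kl.1 + kl.2))

/-- `θ(z|p) = (z;p)_∞ (p/z;p)_∞`. -/
def theta (z p : ℂ) : ℂ := qPoch z p * qPoch (p / z) p

/-- `t(ζ) = ζ⁻¹ θ(qζ²|q⁴)/θ(qζ⁻²|q⁴)`. -/
def tfun (q ζ : ℂ) : ℂ := ζ⁻¹ * theta (q * ζ ^ 2) (q ^ 4) / theta (q * (ζ ^ 2)⁻¹) (q ^ 4)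

/-- `b(ζ) = (1-ζ²)q/(1-ζ²q²)`. -/
def Rb (q ζ : ℂ) : ℂ := (1 - ζ ^ 2) * q / (1 - ζ ^ 2 * q ^ 2)

/-- `c(ζ) = (1-q²)ζ/(1-ζ²q²)`. -/
def Rc (q ζ : ℂ) : ℂ := (1 - q ^ 2) * ζ / (1 - ζ ^ 2 * q ^ 2)

/-- The six-vertex R-matrix; the index `0 : Fin 2` encodes `+` and `1 : Fin 2` encodes `−`.
Rows are the upper (outgoing) indices, columns the lower (incoming) indices. -/
def Rmat (q ζ : ℂ) : Matrix (Fin 2 × Fin 2) (Fin 2 × Fin 2) ℂ :=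
  Matrix.of fun e f =>
    if e.1 = e.2 then (if f = e then 1 else 0)
    else if f = e then Rb q ζ
    else if f = (e.2, e.1) then Rc q ζ
    else 0

/-- The transposition `P(x⊗y) = y⊗x` on `V ⊗ V`. -/
def Pmat : Matrix (Fin 2 × Fin 2) (Fin 2 × Fin 2) ℂ :=
  Matrix.of fun e f => if f = (e.2, e.1) then 1 else 0

/-- The scalar factor `S₀(ζ)` with `z = ζ²`. -/
def S0 (q ζ : ℂ) : ℂ :=
  ζ * qPoch (ζ ^ 2)⁻¹ (q ^ 4) * qPoch (ζ ^ 2 * q ^ 2) (q ^ 4) /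
    (qPoch (ζ ^ 2) (q ^ 4) * qPoch ((ζ ^ 2)⁻¹ * q ^ 2) (q ^ 4))

/-- The scattering matrix `S(ζ) = S₀(ζ) R(ζ)`. -/
def Smat (q ζ : ℂ) : Matrix (Fin 2 × Fin 2) (Fin 2 × Fin 2) ℂ := S0 q ζ • Rmat q ζ

/-- Admissibility of the argument of the S-matrix: all denominators occurring in
`S(ζ)` are nonzero. -/
def Sdef (q ζ : ℂ) : Prop :=
  ζ ≠ 0 ∧ 1 - ζ ^ 2 * q ^ 2 ≠ 0 ∧ qPoch (ζ ^ 2) (q ^ 4) ≠ 0 ∧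
    qPoch ((ζ ^ 2)⁻¹ * q ^ 2) (q ^ 4) ≠ 0

/-- Kronecker (tensor) product of two operators on `V`. -/
def kron (A B : Matrix (Fin 2) (Fin 2) ℂ) : Matrix (Fin 2 × Fin 2) (Fin 2 × Fin 2) ℂ :=
  Matrix.of fun e f => A e.1 f.1 * B e.2 f.2

/-- `D = diag(δ, δ⁻¹)`. -/
def Dmat (δ : ℂ) : Matrix (Fin 2) (Fin 2) ℂ :=
  Matrix.of fun i j => if i = j then (if i = 0 then δ else δ⁻¹) else 0

/-- `D̄ = diag(δ, −δ⁻¹)`. -/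
def Dbar (δ : ℂ) : Matrix (Fin 2) (Fin 2) ℂ :=
  Matrix.of fun i j => if i = j then (if i = 0 then δ else -δ⁻¹) else 0

/-- The operator on `V^{⊗N}` acting as `M` on the `(j,k)`-th tensor factors and as the
identity elsewhere.  A vector of `V^{⊗N}` is encoded by its coordinates
`(Fin N → Fin 2) → ℂ` in the basis `v_{ε₁} ⊗ ⋯ ⊗ v_{ε_N}`. -/
def embed2 {N : ℕ} (M : Matrix (Fin 2 × Fin 2) (Fin 2 × Fin 2) ℂ) (j k : Fin N) :
    Matrix (Fin N → Fin 2) (Fin N → Fin 2) ℂ :=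
  Matrix.of fun a b =>
    M (a j, a k) (b j, b k) *
      ∏ i : Fin N, (if i = j ∨ i = k then 1 else if a i = b i then 1 else 0)

/-- The operator on `V^{⊗N}` acting as `M` on the `j`-th tensor factor. -/
def embed1 {N : ℕ} (M : Matrix (Fin 2) (Fin 2) ℂ) (j : Fin N) :
    Matrix (Fin N → Fin 2) (Fin N → Fin 2) ℂ :=
  Matrix.of fun a b =>
    M (a j) (b j) * ∏ i : Fin N, (if i = j then 1 else if a i = b i then 1 else 0)

/-- Number of `−` signs (i.e. of indices equal to `1`) in a basis configuration. -/
def countMinus {N : ℕ} (a : Fin N → Fin 2) : ℕ :=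
  (Finset.univ.filter fun i => a i = 1).card

/-- Membership in the weight subspace `V^{(n l)} ⊆ V^{⊗N}` (with `l = N - n`):
the coordinates vanish off configurations with exactly `n` minus signs. -/
def inVnl {N : ℕ} (n : ℕ) (v : (Fin N → Fin 2) → ℂ) : Prop :=
  ∀ a, countMinus a ≠ n → v a = 0

/-- The vector `w ⊗ u_σ ∈ V^{⊗N}`, where `w ∈ V^{⊗(N-2)}` occupies the slots `0,…,N-3`
and `u_σ = v₋⊗v₊ + σ v₊⊗v₋` occupies the slots `N-2, N-1`. -/
def tensU {N : ℕ} (hN : 2 ≤ N) (σ : ℂ) (w : (Fin (N - 2) → Fin 2) → ℂ) :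
    (Fin N → Fin 2) → ℂ :=
  fun a =>
    w (fun i => a ⟨i.1, by have := i.isLt; omega⟩) *
      (if a ⟨N - 2, by omega⟩ = 1 ∧ a ⟨N - 1, by omega⟩ = 0 then 1
       else if a ⟨N - 2, by omega⟩ = 0 ∧ a ⟨N - 1, by omega⟩ = 1 then σ else 0)

/-- `P₁₂ P₂₃ ⋯ P_{N−1,N}` on `V^{⊗N}` (1-based labels; 0-based sites `0,…,N-1`). -/
def Pchain (N : ℕ) : Matrix (Fin N → Fin 2) (Fin N → Fin 2) ℂ :=
  (List.ofFn fun t : Fin (N - 1) =>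
    embed2 Pmat ⟨t.1, by have := t.isLt; omega⟩ ⟨t.1 + 1, by have := t.isLt; omega⟩).prod

/-- `S_{1,…,N−2|N−1}(ζ₁,…,ζ_{N−2}|w) = S_{1,N−1}(ζ₁/w) ⋯ S_{N−2,N−1}(ζ_{N−2}/w)`
(1-based labels; the `j`-th spectral parameter `ζ_j` is `ζ (j-1)`). -/
def SchainUp (q : ℂ) (N : ℕ) (ζ : ℕ → ℂ) (w : ℂ) :
    Matrix (Fin N → Fin 2) (Fin N → Fin 2) ℂ :=
  (List.ofFn fun t : Fin (N - 2) =>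
    embed2 (Smat q (ζ t.1 / w)) ⟨t.1, by have := t.isLt; omega⟩
      ⟨N - 2, by have := t.isLt; omega⟩).prod

/-- `S_{N−1|1,…,N−2}(w|ζ₁,…,ζ_{N−2}) = S_{N−1,N−2}(w/ζ_{N−2}) ⋯ S_{N−1,1}(w/ζ₁)`. -/
def SchainDown (q : ℂ) (N : ℕ) (ζ : ℕ → ℂ) (w : ℂ) :
    Matrix (Fin N → Fin 2) (Fin N → Fin 2) ℂ :=
  (List.ofFn fun t : Fin (N - 2) =>
    embed2 (Smat q (w / ζ (N - 3 - t.1))) ⟨N - 2, by have := t.isLt; omega⟩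
      ⟨N - 3 - t.1, by have := t.isLt; omega⟩).prod

/-- `R_{N−1|1,…,N−2}(w|ζ₁,…,ζ_{N−2}) = R_{N−1,N−2}(w/ζ_{N−2}) ⋯ R_{N−1,1}(w/ζ₁)`. -/
def RchainDown (q : ℂ) (N : ℕ) (ζ : ℕ → ℂ) (w : ℂ) :
    Matrix (Fin N → Fin 2) (Fin N → Fin 2) ℂ :=
  (List.ofFn fun t : Fin (N - 2) =>
    embed2 (Rmat q (w / ζ (N - 3 - t.1))) ⟨N - 2, by have := t.isLt; omega⟩
      ⟨N - 3 - t.1, by have := t.isLt; omega⟩).prod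

/-- `R_{1,…,M−1|M}(ζ₁,…,ζ_{M−1}|w) = R_{1,M}(ζ₁/w) ⋯ R_{M−1,M}(ζ_{M−1}/w)` on `V^{⊗M}`. -/
def RchainUp (q : ℂ) (M : ℕ) (ζ : ℕ → ℂ) (w : ℂ) :
    Matrix (Fin M → Fin 2) (Fin M → Fin 2) ℂ :=
  (List.ofFn fun t : Fin (M - 1) =>
    embed2 (Rmat q (ζ t.1 / w)) ⟨t.1, by have := t.isLt; omega⟩
      ⟨M - 1, by have := t.isLt; omega⟩).prod

/-- The action of `Δ^{(M-1)}(f₀)` on the tensor product of evaluation representations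
with parameters `ζ 0, …, ζ (M-1)`:
`π(f₀) = Σ_j 1^{⊗j} ⊗ π_{ζ_j}(f₀) ⊗ π(t₀⁻¹) ⊗ ⋯ ⊗ π(t₀⁻¹)`, where
`π_ζ(f₀)v₊ = 0`, `π_ζ(f₀)v₋ = ζ⁻¹v₊`, `π_ζ(t₀⁻¹)v₊ = q v₊`, `π_ζ(t₀⁻¹)v₋ = q⁻¹ v₋`. -/
def f0op (q : ℂ) (M : ℕ) (ζ : ℕ → ℂ) : Matrix (Fin M → Fin 2) (Fin M → Fin 2) ℂ :=
  ∑ j : Fin M, Matrix.of fun a b =>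
    (if a j = 0 ∧ b j = 1 then (ζ j.1)⁻¹ else 0) *
      ∏ i : Fin M,
        (if i < j then (if a i = b i then 1 else 0)
         else if j < i then (if a i = b i then (if b i = 0 then q else q⁻¹) else 0)
         else 1)

/-- `M = tr_{N−1}( D̄_{N−1} R_{1,…,N−2|N−1}(ζ₁,…,ζ_{N−2}|ζ_{N−1}) ) ∈ End(V^{⊗(N−2)})`:
partial trace over the last factor of `V^{⊗(N-1)}`. -/
def Mop (q δ : ℂ) (N : ℕ) (hN : 3 ≤ N) (ζ : ℕ → ℂ) :
    Matrix (Fin (N - 2) → Fin 2) (Fin (N - 2) → Fin 2) ℂ :=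
  Matrix.of fun a b => ∑ e : Fin 2,
    (embed1 (N := N - 1) (Dbar δ) ⟨N - 2, by omega⟩ * RchainUp q (N - 1) ζ (ζ (N - 2)))
      (fun i => if h : i.1 < N - 2 then a ⟨i.1, h⟩ else e)
      (fun i => if h : i.1 < N - 2 then b ⟨i.1, h⟩ else e)

/-- `f(z) = (q⁵z;q⁴,q⁴)_∞ (q⁵/z;q⁴,q⁴)_∞ / ((q³z;q⁴,q⁴)_∞ (q³/z;q⁴,q⁴)_∞)`. -/
def ffun (q z : ℂ) : ℂ :=
  qPoch2 (q ^ 5 * z) (q ^ 4) * qPoch2 (q ^ 5 / z) (q ^ 4) /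
    (qPoch2 (q ^ 3 * z) (q ^ 4) * qPoch2 (q ^ 3 / z) (q ^ 4))

/-- `u = (−1)^{N−m} s^{N−6m} (∏_μ x_μ)(∏_k ξ_k) / (∏_j ζ_j)`, where `s² = q⁻¹`
(so that `s^{N-6m}` realizes `τ^{N/2-3m}` with `τ = q⁻¹`). -/
def uu (s : ℂ) (N m : ℕ) (ξ x ζ : ℕ → ℂ) : ℂ :=
  (-1) ^ (N - m) * s ^ ((N : ℤ) - 6 * (m : ℤ)) *
    (∏ μ ∈ Finset.range m, x μ) * (∏ k ∈ Finset.range (N - 2 * m), ξ k) /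
    (∏ j ∈ Finset.range N, ζ j)

/-- The explicit kernel
`ϑ_ε(x₁,…,x_m|ζ₁,…,ζ_N) = (∏_j ζ_j^{N−2m}) (∏_{μ<ν} x_μ θ(x_ν/x_μ|q²))
  ε^N θ(−εu|q²) (∏_{k,μ} θ(ξ_k²/x_μ|q⁴)) (∏_{j,k} f(z_j/ξ_k²))`, `z_j = ζ_j²`. -/
def vth (q s : ℂ) (N m : ℕ) (ξ : ℕ → ℂ) (ε : ℂ) (x ζ : ℕ → ℂ) : ℂ :=
  (∏ j ∈ Finset.range N, ζ j ^ (N - 2 * m)) *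
    (∏ μ ∈ Finset.range m, ∏ ν ∈ Finset.Ioo μ m, x μ * theta (x ν / x μ) (q ^ 2)) *
    (ε ^ N * theta (-ε * uu s N m ξ x ζ) (q ^ 2)) *
    (∏ k ∈ Finset.range (N - 2 * m), ∏ μ ∈ Finset.range m, theta (ξ k ^ 2 / x μ) (q ^ 4)) *
    (∏ j ∈ Finset.range N, ∏ k ∈ Finset.range (N - 2 * m), ffun q (ζ j ^ 2 / ξ k ^ 2))


section Helpers

lemma hasProd_zero_of_eq_zero {f : ℕ → ℂ} {k0 : ℕ} (h : f k0 = 0) : HasProd f 0 := by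
  have hev : ∀ᶠ s : Finset ℕ in Filter.atTop, ∏ i ∈ s, f i = 0 := by
    filter_upwards [Filter.eventually_ge_atTop ({k0} : Finset ℕ)] with s hs
    exact Finset.prod_eq_zero (hs (Finset.mem_singleton_self k0)) h
  exact (tendsto_const_nhds).congr' (hev.mono fun s hs => hs.symm)

lemma multipliable_oneSub (a p : ℂ) (hp : ‖p‖ < 1) :
    Multipliable fun k : ℕ => 1 - a * p ^ k := by
  by_cases hz : ∃ k : ℕ, 1 - a * p ^ k = 0
  · obtain ⟨k0, hk0⟩ := hz
    exact ⟨0, hasProd_zero_of_eq_zero hk0⟩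
  · push_neg at hz
    have hsum : Summable fun n : ℕ => Complex.log (1 - a * p ^ n) := by
      have hgeo : Summable fun n : ℕ => (3/2 : ℝ) * (‖a‖ * ‖p‖ ^ n) := by
        apply Summable.mul_left
        apply Summable.mul_left
        exact summable_geometric_of_lt_one (norm_nonneg p) hp
      apply Summable.of_norm_bounded_eventually_nat hgeo
      have htend : Filter.Tendsto (fun n : ℕ => ‖a‖ * ‖p‖ ^ n)
          Filter.atTop (nhds 0) := by
        simpa using (tendsto_pow_atTop_nhds_zero_of_lt_one (norm_nonneg p) hp).const_mul
          ‖a‖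
      have hev : ∀ᶠ n : ℕ in Filter.atTop, ‖a‖ * ‖p‖ ^ n ≤ 1/2 :=
        htend.eventually_le_const (show (0:ℝ) < 1/2 by norm_num)
      filter_upwards [hev] with n hn
      have harg : ‖-(a * p ^ n)‖ ≤ 1/2 := by
        simpa [norm_neg, norm_mul, norm_pow] using hn
      have hb := Complex.norm_log_one_add_half_le_self harg
      have he : (1 : ℂ) + -(a * p ^ n) = 1 - a * p ^ n := by ring
      rw [he] at hb
      refine hb.trans ?_
      have he2 : ‖-(a * p ^ n)‖ = ‖a‖ * ‖p‖ ^ n := by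
        simp [norm_neg, norm_mul, norm_pow]
      rw [he2]
    exact Complex.multipliable_of_summable_log hsum

set_option maxHeartbeats 1000000 in
lemma qPoch_rec (a p : ℂ) (hp : ‖p‖ < 1) :
    qPoch a p = (1 - a) * qPoch (a * p) p := by
  have hm : Multipliable fun n : ℕ => 1 - a * p ^ (n + 1) := by
    refine (multipliable_oneSub (a * p) p hp).congr fun n => ?_
    rw [pow_succ]; ring
  unfold qPoch
  rw [tprod_eq_zero_mul' hm]
  congr 1
  · simp
  · exact tprod_congr fun n => by rw [pow_succ]; ring

lemma theta_mul_base (p z : ℂ) (hp : ‖p‖ < 1) (hp0 : p ≠ 0) (hz : z ≠ 0) :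
    theta (p * z) p = -z⁻¹ * theta z p := by
  unfold theta
  have h1 : p / (p * z) = z⁻¹ := by field_simp
  have h2 : p / z = z⁻¹ * p := by rw [div_eq_mul_inv]; ring
  rw [h1, h2, qPoch_rec z⁻¹ p hp, qPoch_rec z p hp,
    show z * p = p * z from mul_comm z p,
    show (1 - z⁻¹ : ℂ) = -z⁻¹ * (1 - z) by field_simp; ring]
  ring

lemma theta_div_base (p z : ℂ) (hp : ‖p‖ < 1) (hp0 : p ≠ 0) (hz : z ≠ 0) :
    theta (z / p) p = -(z / p) * theta z p := by
  have hzp : z / p ≠ 0 := div_ne_zero hz hp0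
  have h := theta_mul_base p (z / p) hp hp0 hzp
  rw [mul_div_cancel₀ _ hp0] at h
  rw [h]
  field_simp

end Helpers

set_option maxHeartbeats 4000000 in
/-- Quasi-periodicity of the kernel `ϑ` in the integration variables:
`ϑ_ε(x₁,…,x_μ q⁻⁴,…,x_m|ζ) = (∏_j (−x_μ q⁻¹/z_j)) ϑ_ε(x|ζ)` with `z_j = ζ_j²`. -/
theorem vth_x_quasi_periodicity (q : ℂ) (hq0 : 0 < ‖q‖) (hq1 : ‖q‖ < 1)
    (N m : ℕ) (hN : 1 ≤ N) (hm : 2 * m ≤ N)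
    (ξ : ℕ → ℂ) (hξ : ∀ k < N - 2 * m, ξ k ≠ 0)
    (s : ℂ) (hs : s ^ 2 = q⁻¹) (ε : ℂ) (hε : ε = 1 ∨ ε = -1)
    (x ζ : ℕ → ℂ) (hx : ∀ ν < m, x ν ≠ 0) (hζ : ∀ j < N, ζ j ≠ 0)
    (hden : ∀ j < N, ∀ k < N - 2 * m,
      qPoch2 (q ^ 3 * (ζ j ^ 2 / ξ k ^ 2)) (q ^ 4) ≠ 0 ∧
      qPoch2 (q ^ 3 / (ζ j ^ 2 / ξ k ^ 2)) (q ^ 4) ≠ 0)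
    (μ : ℕ) (hμ : μ < m) :
    vth q s N m ξ ε (fun ν => if ν = μ then x μ / q ^ 4 else x ν) ζ
      = (∏ j ∈ Finset.range N, (-(x μ) / q / ζ j ^ 2)) * vth q s N m ξ ε x ζ := by
  classical
  have hq : q ≠ 0 := by
    intro h; rw [h] at hq0; simp at hq0
  have hq2 : (q : ℂ) ^ 2 ≠ 0 := pow_ne_zero 2 hq
  have hq4 : (q : ℂ) ^ 4 ≠ 0 := pow_ne_zero 4 hq
  have habs2 : ‖(q ^ 2)‖ < 1 := by
    rw [norm_pow]; exact pow_lt_one₀ (norm_nonneg q) hq1 two_ne_zero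
  have habs4 : ‖(q ^ 4)‖ < 1 := by
    rw [norm_pow]; exact pow_lt_one₀ (norm_nonneg q) hq1 (by norm_num)
  have hxμ : x μ ≠ 0 := hx μ hμ
  have hεne : ε ≠ 0 := by rcases hε with h | h <;> rw [h] <;> norm_num
  have hs0 : s ≠ 0 := by
    intro h
    rw [h, pow_two, mul_zero] at hs
    exact hq (inv_eq_zero.mp hs.symm)
  have hμm : μ ∈ Finset.range m := Finset.mem_range.mpr hμ
  set x' : ℕ → ℂ := fun ν => if ν = μ then x μ / q ^ 4 else x ν with hx'def
  have hx'μ : x' μ = x μ / q ^ 4 := if_pos rfl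
  have hx'ne : ∀ ν, ν ≠ μ → x' ν = x ν := fun ν hν => if_neg hν
  -- nonvanishing of the products
  have hPx : (∏ ν ∈ Finset.range m, x ν) ≠ 0 :=
    Finset.prod_ne_zero_iff.mpr fun ν hν => hx ν (Finset.mem_range.mp hν)
  have hPξ : (∏ k ∈ Finset.range (N - 2 * m), ξ k) ≠ 0 :=
    Finset.prod_ne_zero_iff.mpr fun k hk => hξ k (Finset.mem_range.mp hk)
  have hPz : (∏ j ∈ Finset.range N, ζ j) ≠ 0 :=
    Finset.prod_ne_zero_iff.mpr fun j hj => hζ j (Finset.mem_range.mp hj)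
  -- Step B : the pair product
  have hB : (∏ a ∈ Finset.range m, ∏ b ∈ Finset.Ioo a m, x' a * theta (x' b / x' a) (q ^ 2))
      = ((∏ b ∈ Finset.Ioo μ m, x μ ^ 2 / (q ^ 6 * x b ^ 2)) *
          ∏ a ∈ Finset.range μ, x μ ^ 2 / (q ^ 6 * x a ^ 2)) *
        ∏ a ∈ Finset.range m, ∏ b ∈ Finset.Ioo a m, x a * theta (x b / x a) (q ^ 2) := by
    have hpt : ∀ a ∈ Finset.range m, ∀ b ∈ Finset.Ioo a m,
        x' a * theta (x' b / x' a) (q ^ 2) =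
        (if a = μ then x μ ^ 2 / (q ^ 6 * x b ^ 2)
          else if b = μ then x μ ^ 2 / (q ^ 6 * x a ^ 2) else 1) *
          (x a * theta (x b / x a) (q ^ 2)) := by
      intro a ha b hb
      have hab : a < b := (Finset.mem_Ioo.mp hb).1
      have hbm : b < m := (Finset.mem_Ioo.mp hb).2
      have hxa : x a ≠ 0 := hx a (lt_trans hab hbm)
      have hxb : x b ≠ 0 := hx b hbm
      by_cases haμ : a = μ
      · have hbμ : b ≠ μ := by omega
        rw [haμ, hx'μ, hx'ne b hbμ, if_pos rfl]
        have hxa' : x μ ≠ 0 := hxμ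
        have e1 : x b / (x μ / q ^ 4) = q ^ 2 * (q ^ 2 * (x b / x μ)) := by
          rw [div_div_eq_mul_div]; ring
        rw [e1, theta_mul_base (q ^ 2) _ habs2 hq2
            (mul_ne_zero hq2 (div_ne_zero hxb hxa')),
          theta_mul_base (q ^ 2) _ habs2 hq2 (div_ne_zero hxb hxa')]
        field_simp
      · by_cases hbμ : b = μ
        · rw [hbμ, hx'μ, hx'ne a haμ, if_neg haμ, if_pos rfl]
          have e1 : x μ / q ^ 4 / x a = x μ / x a / q ^ 2 / q ^ 2 := by
            rw [div_div, div_div, div_div]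
            congr 1
            ring
          rw [e1, theta_div_base (q ^ 2) _ habs2 hq2
              (div_ne_zero (div_ne_zero hxμ hxa) hq2),
            theta_div_base (q ^ 2) _ habs2 hq2 (div_ne_zero hxμ hxa)]
          field_simp
        · rw [hx'ne a haμ, hx'ne b hbμ, if_neg haμ, if_neg hbμ, one_mul]
    calc (∏ a ∈ Finset.range m, ∏ b ∈ Finset.Ioo a m, x' a * theta (x' b / x' a) (q ^ 2))
        = ∏ a ∈ Finset.range m, ∏ b ∈ Finset.Ioo a m,
            ((if a = μ then x μ ^ 2 / (q ^ 6 * x b ^ 2)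
              else if b = μ then x μ ^ 2 / (q ^ 6 * x a ^ 2) else 1) *
             (x a * theta (x b / x a) (q ^ 2))) :=
          Finset.prod_congr rfl fun a ha => Finset.prod_congr rfl fun b hb => hpt a ha b hb
      _ = (∏ a ∈ Finset.range m, ∏ b ∈ Finset.Ioo a m,
            (if a = μ then x μ ^ 2 / (q ^ 6 * x b ^ 2)
              else if b = μ then x μ ^ 2 / (q ^ 6 * x a ^ 2) else 1)) *
          ∏ a ∈ Finset.range m, ∏ b ∈ Finset.Ioo a m, x a * theta (x b / x a) (q ^ 2) := by
          simp only [Finset.prod_mul_distrib]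
      _ = _ := by
          congr 1
          rw [← Finset.mul_prod_erase _ _ hμm]
          congr 1
          · exact Finset.prod_congr rfl fun b hb => if_pos rfl
          · have h1 : ∀ a ∈ (Finset.range m).erase μ,
                (∏ b ∈ Finset.Ioo a m,
                  (if a = μ then x μ ^ 2 / (q ^ 6 * x b ^ 2)
                    else if b = μ then x μ ^ 2 / (q ^ 6 * x a ^ 2) else 1)) =
                (if a < μ then x μ ^ 2 / (q ^ 6 * x a ^ 2) else 1) := by
              intro a ha
              have haμ : a ≠ μ := Finset.ne_of_mem_erase ha
              have ham : a < m := Finset.mem_range.mp (Finset.mem_of_mem_erase ha)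
              rw [Finset.prod_congr rfl (fun b _ => if_neg haμ), Finset.prod_ite_eq']
              by_cases hlt : a < μ
              · rw [if_pos (Finset.mem_Ioo.mpr ⟨hlt, hμ⟩), if_pos hlt]
              · rw [if_neg (by simp [Finset.mem_Ioo]; omega), if_neg hlt]
            rw [Finset.prod_congr rfl h1, ← Finset.prod_filter]
            congr 1
            ext a
            simp only [Finset.mem_filter, Finset.mem_erase, Finset.mem_range]
            omega
  -- Step D : the theta(ξ²/x) product
  have hD : (∏ k ∈ Finset.range (N - 2 * m), ∏ ν ∈ Finset.range m,
        theta (ξ k ^ 2 / x' ν) (q ^ 4))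
      = (∏ k ∈ Finset.range (N - 2 * m), (-(x μ) / ξ k ^ 2)) *
        ∏ k ∈ Finset.range (N - 2 * m), ∏ ν ∈ Finset.range m,
          theta (ξ k ^ 2 / x ν) (q ^ 4) := by
    rw [← Finset.prod_mul_distrib]
    refine Finset.prod_congr rfl fun k hk => ?_
    have hξk : ξ k ≠ 0 := hξ k (Finset.mem_range.mp hk)
    have hξk2 : ξ k ^ 2 ≠ 0 := pow_ne_zero 2 hξk
    have hpt : ∀ ν ∈ Finset.range m,
        theta (ξ k ^ 2 / x' ν) (q ^ 4) =
        (if ν = μ then -(x μ) / ξ k ^ 2 else 1) * theta (ξ k ^ 2 / x ν) (q ^ 4) := by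
      intro ν hν
      by_cases hνμ : ν = μ
      · rw [hνμ, hx'μ, if_pos rfl]
        have e1 : ξ k ^ 2 / (x μ / q ^ 4) = q ^ 4 * (ξ k ^ 2 / x μ) := by
          rw [div_div_eq_mul_div]; ring
        rw [e1, theta_mul_base (q ^ 4) _ habs4 hq4 (div_ne_zero hξk2 hxμ)]
        field_simp
      · rw [hx'ne ν hνμ, if_neg hνμ, one_mul]
    rw [Finset.prod_congr rfl hpt, Finset.prod_mul_distrib, Finset.prod_ite_eq',
      if_pos hμm]
  -- Step C : the theta(-εu) factor
  have hPx' : (∏ ν ∈ Finset.range m, x' ν) = (∏ ν ∈ Finset.range m, x ν) / q ^ 4 := by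
    rw [← Finset.mul_prod_erase _ x' hμm, ← Finset.mul_prod_erase _ x hμm,
      Finset.prod_congr rfl (fun ν hν => hx'ne ν (Finset.ne_of_mem_erase hν)), hx'μ]
    ring
  have hu' : uu s N m ξ x' ζ = uu s N m ξ x ζ / q ^ 4 := by
    unfold uu; rw [hPx']; ring
  have hu0 : uu s N m ξ x ζ ≠ 0 := by
    unfold uu
    exact div_ne_zero (mul_ne_zero (mul_ne_zero (mul_ne_zero
      (pow_ne_zero _ (by norm_num)) (zpow_ne_zero _ hs0)) hPx) hPξ) hPz
  have hw0 : -ε * uu s N m ξ x ζ ≠ 0 := mul_ne_zero (neg_ne_zero.mpr hεne) hu0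
  have hC : theta (-ε * uu s N m ξ x' ζ) (q ^ 2)
      = ((-ε * uu s N m ξ x ζ) ^ 2 / (q ^ 2) ^ 3) *
        theta (-ε * uu s N m ξ x ζ) (q ^ 2) := by
    have harg : -ε * uu s N m ξ x' ζ = (-ε * uu s N m ξ x ζ / q ^ 2) / q ^ 2 := by
      rw [hu']; field_simp
    rw [harg, theta_div_base (q ^ 2) _ habs2 hq2 (div_ne_zero hw0 hq2),
      theta_div_base (q ^ 2) _ habs2 hq2 hw0]
    field_simp
  -- the scalar identity
  obtain ⟨r, hr⟩ : ∃ r, m = μ + 1 + r := ⟨m - μ - 1, by omega⟩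
  obtain ⟨kk, hkk⟩ : ∃ kk, N = 2 * m + kk := ⟨N - 2 * m, by omega⟩
  have key : ((∏ b ∈ Finset.Ioo μ m, x μ ^ 2 / (q ^ 6 * x b ^ 2)) *
          ∏ a ∈ Finset.range μ, x μ ^ 2 / (q ^ 6 * x a ^ 2)) *
        ((-ε * uu s N m ξ x ζ) ^ 2 / (q ^ 2) ^ 3) *
        (∏ k ∈ Finset.range (N - 2 * m), (-(x μ) / ξ k ^ 2))
      = ∏ j ∈ Finset.range N, (-(x μ) / q / ζ j ^ 2) := by
    have hc1 : (Finset.Ioo μ m).card = r := by rw [Nat.card_Ioo]; omega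
    have hc3 : N - 2 * m = kk := by omega
    have hQ : (∏ a ∈ Finset.range μ, x a) ≠ 0 :=
      Finset.prod_ne_zero_iff.mpr fun a ha => hx a (by have := Finset.mem_range.mp ha; omega)
    have hR : (∏ b ∈ Finset.Ioo μ m, x b) ≠ 0 :=
      Finset.prod_ne_zero_iff.mpr fun b hb => hx b (Finset.mem_Ioo.mp hb).2
    have e1 : (∏ b ∈ Finset.Ioo μ m, x μ ^ 2 / (q ^ 6 * x b ^ 2))
        = (x μ ^ 2) ^ r / ((q ^ 6) ^ r * (∏ b ∈ Finset.Ioo μ m, x b) ^ 2) := by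
      rw [Finset.prod_div_distrib, Finset.prod_const, hc1, Finset.prod_mul_distrib,
        Finset.prod_const, hc1, Finset.prod_pow]
    have e2 : (∏ a ∈ Finset.range μ, x μ ^ 2 / (q ^ 6 * x a ^ 2))
        = (x μ ^ 2) ^ μ / ((q ^ 6) ^ μ * (∏ a ∈ Finset.range μ, x a) ^ 2) := by
      rw [Finset.prod_div_distrib, Finset.prod_const, Finset.card_range,
        Finset.prod_mul_distrib, Finset.prod_const, Finset.card_range, Finset.prod_pow]
    have e3 : (∏ k ∈ Finset.range (N - 2 * m), (-(x μ) / ξ k ^ 2))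
        = (-(x μ)) ^ kk / (∏ k ∈ Finset.range (N - 2 * m), ξ k) ^ 2 := by
      rw [Finset.prod_div_distrib, Finset.prod_const, Finset.card_range,
        Finset.prod_pow, hc3]
    have e4 : (∏ j ∈ Finset.range N, (-(x μ) / q / ζ j ^ 2))
        = (-(x μ)) ^ N / (q ^ N * (∏ j ∈ Finset.range N, ζ j) ^ 2) := by
      simp only [div_div]
      rw [Finset.prod_div_distrib, Finset.prod_const, Finset.card_range,
        Finset.prod_mul_distrib, Finset.prod_const, Finset.card_range, Finset.prod_pow]
    have e5 : ((-1 : ℂ) ^ (N - m)) ^ 2 = 1 := by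
      rw [← pow_mul, mul_comm, pow_mul]
      norm_num
    have e6 : (s ^ ((N : ℤ) - 6 * (m : ℤ))) ^ 2 = q ^ (6 * m) / q ^ N := by
      have h1 : (s ^ ((N : ℤ) - 6 * (m : ℤ))) ^ 2 = (s ^ 2) ^ ((N : ℤ) - 6 * (m : ℤ)) := by
        rw [← zpow_natCast (s ^ ((N : ℤ) - 6 * (m : ℤ))) 2, ← zpow_mul, mul_comm, zpow_mul,
          zpow_natCast]
      rw [h1, hs, inv_zpow, ← zpow_neg, neg_sub, zpow_sub₀ hq,
        show (6 * (m : ℤ)) = ((6 * m : ℕ) : ℤ) by push_cast; ring,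
        zpow_natCast, zpow_natCast]
    have e7 : (uu s N m ξ x ζ) ^ 2 = (q ^ (6 * m) *
        (∏ ν ∈ Finset.range m, x ν) ^ 2 * (∏ k ∈ Finset.range (N - 2 * m), ξ k) ^ 2) /
        (q ^ N * (∏ j ∈ Finset.range N, ζ j) ^ 2) := by
      unfold uu
      rw [div_pow, mul_pow, mul_pow, mul_pow, e5, one_mul, e6,
        div_mul_eq_mul_div, div_mul_eq_mul_div, div_div]
    have e8 : (-ε * uu s N m ξ x ζ) ^ 2 = (uu s N m ξ x ζ) ^ 2 := by
      rcases hε with h | h <;> rw [h] <;> ring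
    have e9 : (∏ ν ∈ Finset.range m, x ν)
        = (∏ a ∈ Finset.range μ, x a) * (x μ * ∏ b ∈ Finset.Ioo μ m, x b) := by
      rw [Finset.range_eq_Ico, ← Finset.prod_Ico_consecutive x (Nat.zero_le μ) (le_of_lt hμ),
        Finset.prod_eq_prod_Ico_succ_bot hμ, Finset.Ico_add_one_left_eq_Ioo, ← Finset.range_eq_Ico]
    have hqm : q ^ (6 * m) = (q ^ 6) ^ r * (q ^ 6) ^ μ * q ^ 6 := by
      rw [hr]; ring
    have hxN : (-(x μ)) ^ N = (x μ ^ 2) ^ r * ((x μ ^ 2) ^ μ * (x μ ^ 2 * (-(x μ)) ^ kk)) := by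
      have h1 : N = 2 * (μ + 1 + r) + kk := by omega
      rw [h1, pow_add, pow_mul, neg_sq]
      ring
    rw [e1, e2, e8, e7, e9, e3, e4, hqm, hxN]
    simp only [div_div, div_mul_div_comm]
    rw [div_eq_div_iff
      (by repeat' first
            | apply mul_ne_zero
            | exact pow_ne_zero _ (pow_ne_zero _ hq)
            | exact pow_ne_zero _ hq
            | exact pow_ne_zero _ hQ
            | exact pow_ne_zero _ hR
            | exact pow_ne_zero _ hPz
            | exact pow_ne_zero _ hPξ
            | exact hq
            | exact hxμ
            | exact hQ
            | exact hR
            | exact hPz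
            | exact hPξ)
      (by repeat' first
            | apply mul_ne_zero
            | exact pow_ne_zero _ (pow_ne_zero _ hq)
            | exact pow_ne_zero _ hq
            | exact pow_ne_zero _ hQ
            | exact pow_ne_zero _ hR
            | exact pow_ne_zero _ hPz
            | exact pow_ne_zero _ hPξ
            | exact hq
            | exact hxμ
            | exact hQ
            | exact hR
            | exact hPz
            | exact hPξ)]
    ring
  -- assembling
  unfold vth
  rw [hB, hC, hD, ← key]
  ring
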